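/- Let n be even, let A and B be Latin squares of order n/2, and let σ be a cyclic permutation of {1,...,n/2}. Then the n × n block matrix X = [[A, B],[σ(A), B]] (where σ(A) applies σ to the rows of A) is a Hamiltonian double Latin square: every symbol k ∈ {1,...,n/2} appears exactly twice in each row and column of X, and for each k the set of positions of the k-entries of X forms an H-cycle. -/

import Mathlib

/-- A set `S` of positions (in a square array indexed by `α`, with `|α| = n`) is an
H-cycle if for some bijective enumerations `I J : ZMod n → α` it equals
`{(i₁,j₁),(i₂,j₁),(i₂,j₂),…,(iₙ,jₙ),(i₁,jₙ)}`. -/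
def IsHCycle {α : Type*} (n : ℕ) (S : Set (α × α)) : Prop :=
  ∃ I J : ZMod n → α, Function.Bijective I ∧ Function.Bijective J ∧
    S = {p | ∃ a : ZMod n, p = (I a, J a) ∨ p = (I (a + 1), J a)}

/-- A Latin square of order `m`: each symbol occurs exactly once in every row and column. -/
def IsLatin {m : ℕ} (A : Fin m → Fin m → Fin m) : Prop :=
  (∀ i, Function.Bijective (A i)) ∧ (∀ j, Function.Bijective fun i => A i j)

/-- Row enumeration of the H-cycle, as a function on `ℕ`. -/
def rIdef {m : ℕ} (σ : Equiv.Perm (Fin m)) (i₀ : Fin m) (t : ℕ) : Fin m ⊕ Fin m :=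
  if t % 2 = 0 then Sum.inl ((σ ^ (t / 2)) i₀) else Sum.inr ((σ ^ (t / 2)) i₀)

/-- Column enumeration of the H-cycle, as a function on `ℕ`. -/
def rJdef {m : ℕ} (σ : Equiv.Perm (Fin m)) (i₀ : Fin m) (fa fb : Fin m → Fin m) (t : ℕ) :
    Fin m ⊕ Fin m :=
  if t % 2 = 0 then Sum.inr (fb ((σ ^ (t / 2)) i₀)) else Sum.inl (fa ((σ ^ (t / 2 + 1)) i₀))

/-- For Latin squares `A`, `B` of order `m = n/2` and a cyclic permutation `σ` of `[m]`,
the block matrix `X = [[A, B], [σ(A), B]]` is a Hamiltonian double Latin square: every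
symbol appears exactly twice in each row and column, and the positions of each symbol
form an H-cycle. -/
theorem stmt6 {m : ℕ} (A B : Fin m → Fin m → Fin m)
    (hA : IsLatin A) (hB : IsLatin B) (σ : Equiv.Perm (Fin m))
    (hσ : σ.IsCycle ∧ σ.support = Finset.univ) :
    let X : Fin m ⊕ Fin m → Fin m ⊕ Fin m → Fin m := fun r c =>
      match r, c with
      | .inl i, .inl j => A i j
      | .inl i, .inr j => B i j
      | .inr i, .inl j => A (σ i) j
      | .inr i, .inr j => B i j
    (∀ r k, (Finset.univ.filter fun c => X r c = k).card = 2) ∧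
    (∀ c k, (Finset.univ.filter fun r => X r c = k).card = 2) ∧
    (∀ k, IsHCycle (2 * m) {p : (Fin m ⊕ Fin m) × (Fin m ⊕ Fin m) | X p.1 p.2 = k}) := by
  classical
  intro X
  obtain ⟨hσc, hσs⟩ := hσ
  obtain ⟨hA1, hA2⟩ := hA
  obtain ⟨hB1, hB2⟩ := hB
  -- inverse functions along rows and columns
  let aof : Fin m → Fin m → Fin m := fun k i => (Equiv.ofBijective (A i) (hA1 i)).symm k
  let bof : Fin m → Fin m → Fin m := fun k i => (Equiv.ofBijective (B i) (hB1 i)).symm k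
  let acol : Fin m → Fin m → Fin m := fun k j =>
    (Equiv.ofBijective (fun i => A i j) (hA2 j)).symm k
  let bcol : Fin m → Fin m → Fin m := fun k j =>
    (Equiv.ofBijective (fun i => B i j) (hB2 j)).symm k
  have haof : ∀ k i j, A i j = k ↔ j = aof k i := fun k i j =>
    Equiv.apply_eq_iff_eq_symm_apply (Equiv.ofBijective (A i) (hA1 i))
  have hbof : ∀ k i j, B i j = k ↔ j = bof k i := fun k i j =>
    Equiv.apply_eq_iff_eq_symm_apply (Equiv.ofBijective (B i) (hB1 i))
  have hacol : ∀ k i j, A i j = k ↔ i = acol k j := fun k i j =>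
    Equiv.apply_eq_iff_eq_symm_apply (Equiv.ofBijective (fun i => A i j) (hA2 j))
  have hbcol : ∀ k i j, B i j = k ↔ i = bcol k j := fun k i j =>
    Equiv.apply_eq_iff_eq_symm_apply (Equiv.ofBijective (fun i => B i j) (hB2 j))
  refine ⟨?_, ?_, ?_⟩
  · -- rows
    rintro (i | i) k
    · have : (Finset.univ.filter fun c => X (Sum.inl i) c = k)
          = {Sum.inl (aof k i), Sum.inr (bof k i)} := by
        ext c
        rcases c with j | j
        · simp [X, haof k i j]
        · simp [X, hbof k i j]
      rw [this, Finset.card_pair (by simp)]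
    · have : (Finset.univ.filter fun c => X (Sum.inr i) c = k)
          = {Sum.inl (aof k (σ i)), Sum.inr (bof k i)} := by
        ext c
        rcases c with j | j
        · simp [X, haof k (σ i) j]
        · simp [X, hbof k i j]
      rw [this, Finset.card_pair (by simp)]
  · -- columns
    rintro (j | j) k
    · have : (Finset.univ.filter fun r => X r (Sum.inl j) = k)
          = {Sum.inl (acol k j), Sum.inr (σ⁻¹ (acol k j))} := by
        ext r
        rcases r with i | i
        · simp [X, hacol k i j]
        · simp only [X, Finset.mem_filter, Finset.mem_univ, true_and, Finset.mem_insert,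
            Finset.mem_singleton, Sum.inr.injEq, reduceCtorEq, false_or]
          constructor
          · intro h
            have h2 : σ i = acol k j := (hacol k (σ i) j).1 h
            rw [← h2]; simp
          · intro h
            rw [hacol k (σ i) j, h]; simp
      rw [this, Finset.card_pair (by simp)]
    · have : (Finset.univ.filter fun r => X r (Sum.inr j) = k)
          = {Sum.inl (bcol k j), Sum.inr (bcol k j)} := by
        ext r
        rcases r with i | i
        · simp [X, hbcol k i j]
        · simp [X, hbcol k i j]
      rw [this, Finset.card_pair (by simp)]
  · -- H-cycles
    intro k
    have hm : 0 < m := k.pos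
    haveI : NeZero (2 * m) := ⟨by omega⟩
    set i₀ : Fin m := ⟨0, hm⟩ with hi₀
    -- basic cycle facts
    have hcycOn : σ.IsCycleOn ↑(Finset.univ : Finset (Fin m)) := by
      have h := hσc.isCycleOn
      rwa [← Equiv.Perm.coe_support_eq_set_support, hσs] at h
    have hcard : (Finset.univ : Finset (Fin m)).card = m := by simp
    have hpeq : ∀ u v : ℕ, (σ ^ u) i₀ = (σ ^ v) i₀ ↔ u % m = v % m := by
      intro u v
      rw [hcycOn.pow_apply_eq_pow_apply (Finset.mem_univ i₀), hcard]
      rfl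
    have hex : ∀ i : Fin m, ∃ t < m, (σ ^ t) i₀ = i := by
      intro i
      obtain ⟨t, ht, h⟩ := hcycOn.exists_pow_eq (Finset.mem_univ i₀) (Finset.mem_univ i)
      exact ⟨t, by rwa [hcard] at ht, h⟩
    have horder : orderOf σ = m := by rw [hσc.orderOf, hσs, hcard]
    have hpow : ∀ u : ℕ, σ ^ (u % m) = σ ^ u := by
      intro u
      have h := pow_mod_orderOf σ u
      rwa [horder] at h
    -- injectivity of the `aof k` and `bof k` maps
    have haofinj : Function.Injective (aof k) := by
      intro i i' h
      exact (hA2 (aof k i)).1 (by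
        show A i (aof k i) = A i' (aof k i)
        rw [(haof k i (aof k i)).2 rfl, (haof k i' (aof k i)).2 h])
    have hbofinj : Function.Injective (bof k) := by
      intro i i' h
      exact (hB2 (bof k i)).1 (by
        show B i (bof k i) = B i' (bof k i)
        rw [(hbof k i (bof k i)).2 rfl, (hbof k i' (bof k i)).2 h])
    -- the enumerations
    set rI : ℕ → Fin m ⊕ Fin m := rIdef σ i₀ with hrI
    set rJ : ℕ → Fin m ⊕ Fin m := rJdef σ i₀ (aof k) (bof k) with hrJ
    have key : ∀ t : ℕ, t % (2 * m) / 2 = t / 2 % m := fun t =>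
      Nat.mod_mul_right_div_self t 2 m
    have key2 : ∀ t : ℕ, t % (2 * m) % 2 = t % 2 := fun t =>
      Nat.mod_mod_of_dvd t ⟨m, rfl⟩
    have rIper : ∀ t, rI (t % (2 * m)) = rI t := by
      intro t
      simp only [hrI, rIdef, key, key2, hpow]
    have rJper : ∀ t, rJ (t % (2 * m)) = rJ t := by
      intro t
      have h3 : σ ^ (t / 2 % m + 1) = σ ^ (t / 2 + 1) := by
        rw [pow_succ, pow_succ, hpow]
      simp only [hrJ, rJdef, key, key2, hpow, h3]
    -- explicit values
    have rIeven : ∀ t, rI (2 * t) = Sum.inl ((σ ^ t) i₀) := by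
      intro t
      have e0 : 2 * t % 2 = 0 := by omega
      have e1 : 2 * t / 2 = t := by omega
      simp only [hrI, rIdef, e0, e1, eq_self_iff_true, if_true]
    have rIodd : ∀ t, rI (2 * t + 1) = Sum.inr ((σ ^ t) i₀) := by
      intro t
      have e0 : (2 * t + 1) % 2 = 1 := by omega
      have e1 : (2 * t + 1) / 2 = t := by omega
      simp only [hrI, rIdef, e0, e1, if_neg (by omega : ¬(1 = 0))]
    have rJeven : ∀ t, rJ (2 * t) = Sum.inr (bof k ((σ ^ t) i₀)) := by
      intro t
      have e0 : 2 * t % 2 = 0 := by omega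
      have e1 : 2 * t / 2 = t := by omega
      simp only [hrJ, rJdef, e0, e1, eq_self_iff_true, if_true]
    have rJodd : ∀ t, rJ (2 * t + 1) = Sum.inl (aof k ((σ ^ (t + 1)) i₀)) := by
      intro t
      have e0 : (2 * t + 1) % 2 = 1 := by omega
      have e1 : (2 * t + 1) / 2 = t := by omega
      simp only [hrJ, rJdef, e0, e1, if_neg (by omega : ¬(1 = 0))]
    have hval1 : ∀ a : ZMod (2 * m), (a + 1).val = (a.val + 1) % (2 * m) := by
      intro a
      rw [ZMod.val_add, ZMod.val_one_eq_one_mod,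
        Nat.mod_eq_of_lt (show 1 < 2 * m by omega)]
    have hcast : ∀ t : ℕ, ((t : ZMod (2 * m)).val) = t % (2 * m) := fun t =>
      ZMod.val_natCast (2 * m) t
    have hIv : ∀ s : ℕ, rI (((s : ℕ) : ZMod (2 * m)).val) = rI s := by
      intro s; rw [hcast, rIper]
    have hJv : ∀ s : ℕ, rJ (((s : ℕ) : ZMod (2 * m)).val) = rJ s := by
      intro s; rw [hcast, rJper]
    have hI1v : ∀ s : ℕ, rI ((((s : ℕ) : ZMod (2 * m)) + 1).val) = rI (s + 1) := by
      intro s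
      rw [show ((s : ℕ) : ZMod (2 * m)) + 1 = ((s + 1 : ℕ) : ZMod (2 * m)) by push_cast; ring,
        hcast, rIper]
    refine ⟨fun a => rI a.val, fun a => rJ a.val, ?_, ?_, ?_⟩
    · -- rI bijective
      rw [Fintype.bijective_iff_injective_and_card]
      constructor
      · intro a a' h
        have h1 : a.val < 2 * m := ZMod.val_lt a
        have h2 : a'.val < 2 * m := ZMod.val_lt a'
        apply ZMod.val_injective
        have h' : rI a.val = rI a'.val := h
        obtain ⟨u, hu⟩ : ∃ u, a.val = 2 * u ∨ a.val = 2 * u + 1 := ⟨a.val / 2, by omega⟩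
        obtain ⟨v, hv⟩ : ∃ v, a'.val = 2 * v ∨ a'.val = 2 * v + 1 := ⟨a'.val / 2, by omega⟩
        rcases hu with hu | hu <;> rcases hv with hv | hv <;> rw [hu, hv] at h' ⊢
        · rw [rIeven, rIeven] at h'
          have h3 := (hpeq u v).1 (Sum.inl.inj h')
          rw [Nat.mod_eq_of_lt (by omega), Nat.mod_eq_of_lt (by omega)] at h3
          omega
        · rw [rIeven, rIodd] at h'; exact absurd h' (by simp)
        · rw [rIodd, rIeven] at h'; exact absurd h' (by simp)
        · rw [rIodd, rIodd] at h'
          have h3 := (hpeq u v).1 (Sum.inr.inj h')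
          rw [Nat.mod_eq_of_lt (by omega), Nat.mod_eq_of_lt (by omega)] at h3
          omega
      · simp [ZMod.card]; omega
    · -- rJ bijective
      rw [Fintype.bijective_iff_injective_and_card]
      constructor
      · intro a a' h
        have h1 : a.val < 2 * m := ZMod.val_lt a
        have h2 : a'.val < 2 * m := ZMod.val_lt a'
        apply ZMod.val_injective
        have h' : rJ a.val = rJ a'.val := h
        obtain ⟨u, hu⟩ : ∃ u, a.val = 2 * u ∨ a.val = 2 * u + 1 := ⟨a.val / 2, by omega⟩
        obtain ⟨v, hv⟩ : ∃ v, a'.val = 2 * v ∨ a'.val = 2 * v + 1 := ⟨a'.val / 2, by omega⟩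
        rcases hu with hu | hu <;> rcases hv with hv | hv <;> rw [hu, hv] at h' ⊢
        · rw [rJeven, rJeven] at h'
          have h3 := (hpeq u v).1 (hbofinj (Sum.inr.inj h'))
          rw [Nat.mod_eq_of_lt (by omega), Nat.mod_eq_of_lt (by omega)] at h3
          omega
        · rw [rJeven, rJodd] at h'; exact absurd h' (by simp)
        · rw [rJodd, rJeven] at h'; exact absurd h' (by simp)
        · rw [rJodd, rJodd] at h'
          have h3 := (hpeq (u + 1) (v + 1)).1 (haofinj (Sum.inl.inj h'))
          have h4 : u % m = v % m := Nat.ModEq.add_right_cancel' 1 h3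
          rw [Nat.mod_eq_of_lt (by omega), Nat.mod_eq_of_lt (by omega)] at h4
          omega
      · simp [ZMod.card]; omega
    · -- set equality
      ext ⟨r, c⟩
      simp only [Set.mem_setOf_eq]
      constructor
      · -- forward: every position of k is on the cycle
        intro hX
        rcases r with i | i <;> rcases c with j | j
        · -- (inl i, inl j), A i j = k
          have hj : j = aof k i := (haof k i j).1 hX
          obtain ⟨t, ht, hti⟩ := hex i
          refine ⟨((2 * (t + m) - 1 : ℕ) : ZMod (2 * m)), Or.inr ?_⟩
          rw [Prod.mk.injEq]
          constructor
          · rw [hI1v, (by omega : 2 * (t + m) - 1 + 1 = 2 * (t + m)), rIeven,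
              ← hpow (t + m), Nat.add_mod_right, hpow, hti]
          · rw [hJv, (by omega : 2 * (t + m) - 1 = 2 * (t + m - 1) + 1), rJodd,
              (by omega : t + m - 1 + 1 = t + m),
              ← hpow (t + m), Nat.add_mod_right, hpow, hti, hj]
        · -- (inl i, inr j), B i j = k
          have hj : j = bof k i := (hbof k i j).1 hX
          obtain ⟨t, ht, hti⟩ := hex i
          refine ⟨((2 * t : ℕ) : ZMod (2 * m)), Or.inl ?_⟩
          rw [Prod.mk.injEq]
          exact ⟨by rw [hIv, rIeven, hti], by rw [hJv, rJeven, hti, hj]⟩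
        · -- (inr i, inl j), A (σ i) j = k
          have hj : j = aof k (σ i) := (haof k (σ i) j).1 hX
          obtain ⟨t, ht, hti⟩ := hex i
          refine ⟨((2 * t + 1 : ℕ) : ZMod (2 * m)), Or.inl ?_⟩
          rw [Prod.mk.injEq]
          refine ⟨by rw [hIv, rIodd, hti], ?_⟩
          rw [hJv, rJodd, pow_succ', Equiv.Perm.mul_apply, hti, hj]
        · -- (inr i, inr j), B i j = k
          have hj : j = bof k i := (hbof k i j).1 hX
          obtain ⟨t, ht, hti⟩ := hex i
          refine ⟨((2 * t : ℕ) : ZMod (2 * m)), Or.inr ?_⟩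
          rw [Prod.mk.injEq]
          exact ⟨by rw [hI1v, rIodd, hti], by rw [hJv, rJeven, hti, hj]⟩
      · -- backward: every cycle position holds k
        rintro ⟨a, h | h⟩
        · injection h with hr hc
          subst hr; subst hc
          obtain ⟨u, hu | hu⟩ : ∃ u, a.val = 2 * u ∨ a.val = 2 * u + 1 :=
            ⟨a.val / 2, by omega⟩
          · rw [hu, rIeven, rJeven]
            exact (hbof k _ _).2 rfl
          · rw [hu, rIodd, rJodd]
            show A (σ ((σ ^ u) i₀)) (aof k ((σ ^ (u + 1)) i₀)) = k
            rw [show σ ((σ ^ u) i₀) = (σ ^ (u + 1)) i₀ by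
              rw [pow_succ', Equiv.Perm.mul_apply]]
            exact (haof k _ _).2 rfl
        · injection h with hr hc
          subst hr; subst hc
          have hv : rI ((a + 1).val) = rI (a.val + 1) := by rw [hval1]; exact rIper _
          rw [hv]
          obtain ⟨u, hu | hu⟩ : ∃ u, a.val = 2 * u ∨ a.val = 2 * u + 1 :=
            ⟨a.val / 2, by omega⟩
          · rw [hu, rIodd, rJeven]
            exact (hbof k _ _).2 rfl
          · rw [hu, (by omega : 2 * u + 1 + 1 = 2 * (u + 1)), rIeven, rJodd]
            exact (haof k _ _).2 rfl
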